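/- Let ‖·‖ be a gauge on ℝ^d that is (2,D)-smooth with D > 0. Then there exist constants c > 0 and ε₀ > 0, depending only on the gauge and on D, such that the following holds for every ε ∈ (0, ε₀): if Z is a random vector in ℝ^d with atomless distribution satisfying ‖Z‖ ≤ ε almost surely, and the function ‖x‖_ε := E‖x + ‖x‖₂·Z‖ satisfies (1−ε)‖x‖ ≤ ‖x‖_ε ≤ (1+ε)‖x‖ for all x ∈ ℝ^d, then the gauge ‖·‖_ε is (2, D(1+cε))-smooth. -/

import Mathlib

open Pointwise MeasureTheory Metric

set_option maxHeartbeats 1600000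

/-- Randomized smoothing preserves `(2,D)`-smoothness of a gauge, up to a
`(1 + cε)` factor in the modulus: there are constants `c > 0` and `ε₀ > 0`, depending only
on the gauge and `D`, such that for every `ε ∈ (0, ε₀)`, any atomless random perturbation
`Z` with `‖Z‖_K ≤ ε` a.s. whose smoothed gauge `‖x‖_ε = E‖x + ‖x‖₂·Z‖_K` approximates
`‖·‖_K` within factor `(1 ± ε)` yields a `(2, D(1+cε))`-smooth gauge `‖·‖_ε`. -/
theorem smoothing_preserves_two_smoothness
    {d : ℕ} (K : Set (EuclideanSpace ℝ (Fin d)))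
    (hKcomp : IsCompact K) (hKconv : Convex ℝ K)
    (h0 : (0 : EuclideanSpace ℝ (Fin d)) ∈ interior K)
    (D : ℝ) (hD : 0 < D)
    (hsmooth : ∀ x : EuclideanSpace ℝ (Fin d), gauge K x = 1 →
      ∀ y : EuclideanSpace ℝ (Fin d),
        (gauge K (x + y) + gauge K (x - y)) / 2 ≤ 1 + D * gauge K y ^ 2) :
    ∃ c > (0 : ℝ), ∃ ε₀ > (0 : ℝ), ∀ ε : ℝ, 0 < ε → ε < ε₀ →
      ∀ (Ω : Type) (_ : MeasurableSpace Ω) (μ : Measure Ω)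
        (_ : IsProbabilityMeasure μ) (Z : Ω → EuclideanSpace ℝ (Fin d)),
        Measurable Z →
        (∀ z : EuclideanSpace ℝ (Fin d), μ (Z ⁻¹' {z}) = 0) →
        (∀ᵐ ω ∂μ, gauge K (Z ω) ≤ ε) →
        ∀ normEps : EuclideanSpace ℝ (Fin d) → ℝ,
          (∀ x, normEps x = ∫ ω, gauge K (x + ‖x‖ • Z ω) ∂μ) →
          (∀ x, (1 - ε) * gauge K x ≤ normEps x ∧ normEps x ≤ (1 + ε) * gauge K x) →
          ∀ x : EuclideanSpace ℝ (Fin d), normEps x = 1 →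
            ∀ y : EuclideanSpace ℝ (Fin d),
              (normEps (x + y) + normEps (x - y)) / 2
                ≤ 1 + D * (1 + c * ε) * normEps y ^ 2 := by
  classical
  -- basic gauge facts
  have hn : K ∈ nhds (0 : EuclideanSpace ℝ (Fin d)) := mem_interior_iff_mem_nhds.1 h0
  have habs : Absorbent ℝ K := absorbent_nhds_zero hn
  have hcont : Continuous (gauge K) := continuous_gauge hKconv hn
  obtain ⟨r, hr, hball⟩ : ∃ r > 0, ball (0 : EuclideanSpace ℝ (Fin d)) r ⊆ K :=
    Metric.mem_nhds_iff.1 hn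
  obtain ⟨R₀, hR₀⟩ := hKcomp.isBounded.subset_closedBall 0
  set R : ℝ := max R₀ r with hRdef
  have hRr : r ≤ R := le_max_right _ _
  have hRpos : 0 < R := lt_of_lt_of_le hr hRr
  have hR : K ⊆ closedBall 0 R := hR₀.trans (closedBall_subset_closedBall (le_max_left _ _))
  have hup : ∀ v : EuclideanSpace ℝ (Fin d), gauge K v ≤ ‖v‖ / r := fun v => by
    rw [le_div_iff₀ hr, mul_comm]; exact mul_gauge_le_norm hball
  have hlow : ∀ v : EuclideanSpace ℝ (Fin d), ‖v‖ ≤ R * gauge K v := fun v => by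
    have h := le_gauge_of_subset_closedBall habs hRpos.le hR (x := v)
    rw [div_le_iff₀ hRpos] at h; linarith only [h]
  have hgnn : ∀ v : EuclideanSpace ℝ (Fin d), 0 ≤ gauge K v := fun v => gauge_nonneg v
  set M : ℝ := R / r with hMdef
  have hM1 : 1 ≤ M := (one_le_div hr).2 hRr
  have hMpos : 0 < M := lt_of_lt_of_le one_pos hM1
  have hneg : ∀ v : EuclideanSpace ℝ (Fin d), gauge K (-v) ≤ M * gauge K v := fun v => by
    calc gauge K (-v) ≤ ‖-v‖ / r := hup _
      _ = ‖v‖ / r := by rw [norm_neg]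
      _ ≤ (R * gauge K v) / r := by gcongr; exact hlow v
      _ = M * gauge K v := by rw [hMdef]; ring
  have hsub : ∀ u v : EuclideanSpace ℝ (Fin d), gauge K (u + v) ≤ gauge K u + gauge K v :=
    gauge_add_le hKconv habs
  have hsmul : ∀ t : ℝ, 0 ≤ t → ∀ v : EuclideanSpace ℝ (Fin d),
      gauge K (t • v) = t * gauge K v := fun t ht v => gauge_smul_of_nonneg ht v
  -- scaled smoothness
  have smooth2 : ∀ u v : EuclideanSpace ℝ (Fin d), 0 < gauge K u →
      gauge K (u + v) + gauge K (u - v)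
        ≤ 2 * gauge K u + 2 * D * (gauge K v) ^ 2 / gauge K u := by
    intro u v hu
    have hinv : (0:ℝ) ≤ (gauge K u)⁻¹ := inv_nonneg.2 hu.le
    have h1 : gauge K ((gauge K u)⁻¹ • u) = 1 := by
      rw [gauge_smul_of_nonneg hinv, smul_eq_mul, inv_mul_cancel₀ hu.ne']
    have h2 := hsmooth _ h1 ((gauge K u)⁻¹ • v)
    rw [← smul_add, ← smul_sub, gauge_smul_of_nonneg hinv, gauge_smul_of_nonneg hinv,
      gauge_smul_of_nonneg hinv] at h2
    simp only [smul_eq_mul] at h2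
    have h3 : (gauge K u)⁻¹ * gauge K (u+v) + (gauge K u)⁻¹ * gauge K (u-v)
        ≤ 2 * (1 + D * ((gauge K u)⁻¹ * gauge K v)^2) := by linarith only [h2]
    calc gauge K (u+v) + gauge K (u-v)
        = gauge K u * ((gauge K u)⁻¹ * gauge K (u+v) + (gauge K u)⁻¹ * gauge K (u-v)) := by
          field_simp
      _ ≤ gauge K u * (2 * (1 + D * ((gauge K u)⁻¹ * gauge K v)^2)) :=
          mul_le_mul_of_nonneg_left h3 hu.le
      _ = 2 * gauge K u + 2 * D * (gauge K v)^2 * (gauge K u * (gauge K u)⁻¹ * (gauge K u)⁻¹) := by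
          ring
      _ = 2 * gauge K u + 2 * D * (gauge K v)^2 / gauge K u := by
          rw [mul_inv_cancel₀ hu.ne']; field_simp
  -- constants
  set G₀ : ℝ := max 1 ((8 + 3*(1+M))/D) with hG₀def
  have hG₀1 : 1 ≤ G₀ := le_max_left _ _
  set mbar : ℝ := 2*R + R*G₀ with hmbardef
  have hmbarpos : 0 < mbar := by
    rw [hmbardef]
    nlinarith only [hRpos, hG₀1]
  set K₁ : ℝ := 1 + mbar*M with hK₁def
  have hK₁1 : 1 ≤ K₁ := by
    rw [hK₁def]; nlinarith only [hmbarpos, hMpos]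
  have hK₁pos : 0 < K₁ := lt_of_lt_of_le one_pos hK₁1
  set K₂ : ℝ := R^2/r with hK₂def
  have hK₂pos : 0 < K₂ := by
    rw [hK₂def]; exact div_pos (by nlinarith only [hRpos]) hr
  set K₃ : ℝ := 2*R*M + (R*M)^2 with hK₃def
  have hK₃pos : 0 < K₃ := by
    rw [hK₃def]; nlinarith only [hRpos, hMpos, mul_pos hRpos hMpos, sq_nonneg (R*M)]
  set K₄ : ℝ := K₃ + 2*K₁ + 2*K₁*K₃ with hK₄def
  have hK₄pos : 0 < K₄ := by
    rw [hK₄def]; nlinarith only [hK₁pos, hK₃pos, mul_pos hK₁pos hK₃pos]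
  clear_value R M G₀ mbar K₁ K₂ K₃ K₄
  have hQpos : 0 < K₂/D := div_pos hK₂pos hD
  refine ⟨2*(K₂/D + K₄ + 2) + 1, by linarith only [hQpos, hK₄pos],
    min (1/4) (1/(2*K₁)), lt_min (by norm_num) (by
      apply div_pos one_pos; linarith only [hK₁pos]), ?_⟩
  set c : ℝ := 2*(K₂/D + K₄ + 2) + 1 with hcdef
  clear_value c
  have hcpos : 0 < c := by rw [hcdef]; linarith only [hQpos, hK₄pos]
  intro ε hε0 hεlt Ω mΩ μ hprob Z hZmeas hatomless hae normEps hdef hsand x hx1 y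
  have hε4 : ε ≤ 1/4 := le_of_lt (lt_of_lt_of_le hεlt (min_le_left _ _))
  have hεK₁ : K₁ * ε ≤ 1/2 := by
    have h := lt_of_lt_of_le hεlt (min_le_right _ _)
    rw [lt_div_iff₀ (by linarith only [hK₁pos] : (0:ℝ) < 2*K₁)] at h
    linarith only [h]
  have hgy0 : 0 ≤ gauge K y := hgnn y
  have hgx0 : 0 ≤ gauge K x := hgnn x
  have hgx1 : (1 - ε) * gauge K x ≤ 1 := by
    have h := (hsand x).1; rw [hx1] at h; linarith only [h]
  have hgx2 : 1 ≤ (1 + ε) * gauge K x := by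
    have h := (hsand x).2; rw [hx1] at h; linarith only [h]
  have hgxl : 1 - ε ≤ gauge K x := by
    nlinarith only [hgx2, hε0, hgx0, sq_nonneg ε, mul_le_mul_of_nonneg_right hε4 hgx0]
  have hgxu : gauge K x ≤ 4/3 := by
    nlinarith only [hgx1, mul_le_mul_of_nonneg_right hε4 hgx0]
  have hny : (1 - ε) * gauge K y ≤ normEps y := (hsand y).1
  have hnysq : ((1 - ε) * gauge K y)^2 ≤ normEps y ^ 2 :=
    pow_le_pow_left₀ (mul_nonneg (by linarith only [hε4]) hgy0) hny 2
  have hDc0 : 0 ≤ D * (1 + c * ε) :=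
    mul_nonneg hD.le (by nlinarith only [mul_pos hcpos hε0])
  rcases le_or_gt G₀ (gauge K y) with hcase | hcase
  · -- crude case : gauge K y large
    have hDgy : 8 + 3*(1+M) ≤ D * gauge K y := by
      have h1 : (8 + 3*(1+M))/D ≤ gauge K y := le_trans (by rw [hG₀def]; exact le_max_right _ _) hcase
      rw [div_le_iff₀ hD] at h1; linarith only [h1]
    have hgy1 : 1 ≤ gauge K y := le_trans hG₀1 hcase
    have hn1 : normEps (x + y) ≤ (1+ε) * (gauge K x + gauge K y) :=
      le_trans (hsand (x+y)).2
        (mul_le_mul_of_nonneg_left (hsub x y) (by linarith only [hε0]))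
    have hn2 : normEps (x - y) ≤ (1+ε) * (gauge K x + M * gauge K y) := by
      refine le_trans (hsand (x-y)).2
        (mul_le_mul_of_nonneg_left ?_ (by linarith only [hε0]))
      have h1 : gauge K (x - y) ≤ gauge K x + gauge K (-y) := by
        have h := hsub x (-y); rw [← sub_eq_add_neg] at h; exact h
      have h2 := hneg y
      linarith only [h1, h2]
    -- quadratic beats linear
    have p1 : ε * gauge K x ≤ (1/4) * gauge K x := mul_le_mul_of_nonneg_right hε4 hgx0
    have p2 : ε * gauge K y ≤ (1/4) * gauge K y := mul_le_mul_of_nonneg_right hε4 hgy0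
    have hMgy0 : 0 ≤ M * gauge K y := mul_nonneg hMpos.le hgy0
    have p3 : ε * (M * gauge K y) ≤ (1/4) * (M * gauge K y) :=
      mul_le_mul_of_nonneg_right hε4 hMgy0
    have e0 : (3:ℝ)/4 ≤ 1 - ε := by linarith only [hε4]
    have e1 : (9:ℝ)/16 ≤ (1-ε)^2 := by nlinarith only [e0]
    have e2 : 2*D*(gauge K y)^2*(9/16) ≤ 2*D*(gauge K y)^2*(1-ε)^2 :=
      mul_le_mul_of_nonneg_left e1 (by nlinarith only [hD, sq_nonneg (gauge K y)])
    have e3 : (99/8)*gauge K y + (27/8)*(M*gauge K y) ≤ (9/8)*(D*gauge K y)*gauge K y := by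
      nlinarith only [mul_nonneg (sub_nonneg.2 hDgy) hgy0]
    have echain : (99/8)*gauge K y + (27/8)*(M*gauge K y) ≤ 2*D*((1-ε)*gauge K y)^2 := by
      calc (99/8)*gauge K y + (27/8)*(M*gauge K y) ≤ (9/8)*(D*gauge K y)*gauge K y := e3
        _ = 2*D*(gauge K y)^2*(9/16) := by ring
        _ ≤ 2*D*(gauge K y)^2*(1-ε)^2 := e2
        _ = 2*D*((1-ε)*gauge K y)^2 := by ring
    have key : (1+ε) * (gauge K x + gauge K y) + (1+ε) * (gauge K x + M * gauge K y)
        ≤ 2 + 2*D*((1-ε)*gauge K y)^2 := by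
      linarith only [p1, p2, p3, echain, hgxu, hgy1, hMgy0]
    have h1 : D * ((1-ε)*gauge K y)^2 ≤ D * normEps y ^ 2 :=
      mul_le_mul_of_nonneg_left hnysq hD.le
    have h2 : 0 ≤ D * (c*ε) * normEps y ^ 2 :=
      mul_nonneg (mul_nonneg hD.le (mul_pos hcpos hε0).le) (sq_nonneg _)
    linarith only [hn1, hn2, key, h1, h2]
  · -- main case : gauge K y < G₀
    have hs_lb : r * (3/4) ≤ ‖x‖ := by
      have h := hup x
      rw [le_div_iff₀ hr] at h
      nlinarith only [h, hgxl, hε4, hr, mul_le_mul_of_nonneg_left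
        (by linarith only [hgxl, hε4] : (3:ℝ)/4 ≤ gauge K x) hr.le]
    have hs_pos : (0:ℝ) < ‖x‖ := lt_of_lt_of_le (by linarith only [hr]) hs_lb
    have hpar : ‖x+y‖^2 + ‖x-y‖^2 = 2 * (‖x‖^2 + ‖y‖^2) := by
      have h := parallelogram_law_with_norm ℝ x y
      linear_combination h
    have hsp0 : (0:ℝ) ≤ ‖x+y‖ := norm_nonneg _
    have hsm0 : (0:ℝ) ≤ ‖x-y‖ := norm_nonneg _
    have hquad : (‖x+y‖+‖x-y‖)/2 - ‖x‖ ≤ ‖y‖^2 / (2*‖x‖) := by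
      rw [le_div_iff₀ (by linarith only [hs_pos] : (0:ℝ) < 2*‖x‖)]
      nlinarith only [sq_nonneg (‖x‖ - ‖x+y‖), sq_nonneg (‖x‖ - ‖x-y‖), hpar]
    have hms : ‖x‖ ≤ (‖x+y‖+‖x-y‖)/2 := by
      have h2 : x + x = (x + y) + (x - y) := by abel
      have h3 : ‖x + x‖ ≤ ‖x+y‖ + ‖x-y‖ := h2 ▸ norm_add_le _ _
      have h4 : ‖x + x‖ = 2 * ‖x‖ := by
        rw [← two_smul ℝ x, norm_smul]; simp [abs_of_nonneg]
      linarith only [h3, h4]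
    have habse : |(‖x+y‖-‖x-y‖)/2| ≤ ‖y‖ := by
      have h5 : |‖x+y‖ - ‖x-y‖| ≤ ‖(x+y) - (x-y)‖ := abs_norm_sub_norm_le _ _
      have h6 : (x+y) - (x-y) = y + y := by abel
      have h7 : ‖y + y‖ = 2 * ‖y‖ := by
        rw [← two_smul ℝ y, norm_smul]; simp [abs_of_nonneg]
      rw [h6, h7, abs_le] at h5
      rw [abs_le]
      constructor
      · linarith only [h5.1]
      · linarith only [h5.2]
    have hyR : ‖y‖ ≤ R * gauge K y := hlow y
    have hyG : ‖y‖ ≤ R * G₀ :=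
      le_trans hyR (mul_le_mul_of_nonneg_left hcase.le hRpos.le)
    have hsR : ‖x‖ ≤ 2 * R := by
      have h1 : R * gauge K x ≤ R * (4/3) := mul_le_mul_of_nonneg_left hgxu hRpos.le
      linarith only [hlow x, h1, hRpos]
    have hmle : (‖x+y‖+‖x-y‖)/2 ≤ ‖x‖ + ‖y‖ := by
      have h1 : ‖x+y‖ ≤ ‖x‖ + ‖y‖ := norm_add_le x y
      have h2 : ‖x-y‖ ≤ ‖x‖ + ‖y‖ := norm_sub_le x y
      linarith only [h1, h2]
    have hmbar : (‖x+y‖+‖x-y‖)/2 ≤ mbar := by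
      rw [hmbardef]; linarith only [hmle, hyG, hsR]
    have hm0 : (0:ℝ) ≤ (‖x+y‖+‖x-y‖)/2 := le_trans hs_pos.le hms
    have hquad2 : (‖x+y‖+‖x-y‖)/2 - ‖x‖ ≤ K₂ * gauge K y^2 := by
      refine le_trans hquad ?_
      have h1 : ‖y‖^2 ≤ (R*gauge K y)^2 := pow_le_pow_left₀ (norm_nonneg _) hyR 2
      have h2 : r ≤ 2 * ‖x‖ := by linarith only [hs_lb, hr]
      calc ‖y‖^2 / (2*‖x‖) ≤ (R*gauge K y)^2 / r :=
            div_le_div₀ (sq_nonneg _) h1 hr h2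
        _ = K₂ * gauge K y^2 := by rw [hK₂def]; ring
    -- the constant for the pointwise bound
    set Cc : ℝ := 2*ε*K₂*gauge K y^2 + 2*D*(gauge K y*(1+R*M*ε))^2/(1 - K₁*ε) with hCcdef
    clear_value Cc
    have hden : (0:ℝ) < 1 - K₁*ε := by linarith only [hεK₁]
    -- pointwise a.e. bound
    have key : ∀ᵐ ω ∂μ, gauge K ((x+y) + ‖x+y‖ • Z ω) + gauge K ((x-y) + ‖x-y‖ • Z ω)
        ≤ 2 * gauge K (x + ‖x‖ • Z ω) + Cc := by
      filter_upwards [hae] with ω hω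
      have hz0 : 0 ≤ gauge K (Z ω) := hgnn (Z ω)
      have hznegle : gauge K (-(Z ω)) ≤ M * ε :=
        le_trans (hneg (Z ω)) (mul_le_mul_of_nonneg_left hω hMpos.le)
      have hab1 : (x+y) + ‖x+y‖ • Z ω
          = (x + ((‖x+y‖+‖x-y‖)/2) • Z ω) + (y + ((‖x+y‖-‖x-y‖)/2) • Z ω) := by
        have hse : ‖x+y‖ = (‖x+y‖+‖x-y‖)/2 + (‖x+y‖-‖x-y‖)/2 := by ring
        calc (x+y) + ‖x+y‖ • Z ω
            = (x+y) + ((‖x+y‖+‖x-y‖)/2 + (‖x+y‖-‖x-y‖)/2) • Z ω := by rw [← hse]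
          _ = (x + ((‖x+y‖+‖x-y‖)/2) • Z ω) + (y + ((‖x+y‖-‖x-y‖)/2) • Z ω) := by
              rw [add_smul]; abel
      have hab2 : (x-y) + ‖x-y‖ • Z ω
          = (x + ((‖x+y‖+‖x-y‖)/2) • Z ω) - (y + ((‖x+y‖-‖x-y‖)/2) • Z ω) := by
        have hse : ‖x-y‖ = (‖x+y‖+‖x-y‖)/2 - (‖x+y‖-‖x-y‖)/2 := by ring
        calc (x-y) + ‖x-y‖ • Z ω
            = (x-y) + ((‖x+y‖+‖x-y‖)/2 - (‖x+y‖-‖x-y‖)/2) • Z ω := by rw [← hse]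
          _ = (x + ((‖x+y‖+‖x-y‖)/2) • Z ω) - (y + ((‖x+y‖-‖x-y‖)/2) • Z ω) := by
              rw [sub_smul]; abel
      have hga_le : gauge K (x + ((‖x+y‖+‖x-y‖)/2) • Z ω)
          ≤ gauge K (x + ‖x‖ • Z ω) + ((‖x+y‖+‖x-y‖)/2 - ‖x‖) * ε := by
        have hsplit : x + ((‖x+y‖+‖x-y‖)/2) • Z ω
            = (x + ‖x‖ • Z ω) + ((‖x+y‖+‖x-y‖)/2 - ‖x‖) • Z ω := by
          rw [sub_smul]; abel
        rw [hsplit]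
        refine le_trans (hsub _ _) ?_
        rw [hsmul _ (by linarith only [hms]) (Z ω)]
        have h1 : ((‖x+y‖+‖x-y‖)/2 - ‖x‖) * gauge K (Z ω) ≤ ((‖x+y‖+‖x-y‖)/2 - ‖x‖) * ε :=
          mul_le_mul_of_nonneg_left hω (by linarith only [hms])
        linarith only [h1]
      have hga_ge : 1 - K₁ * ε ≤ gauge K (x + ((‖x+y‖+‖x-y‖)/2) • Z ω) := by
        have hxa : x = (x + ((‖x+y‖+‖x-y‖)/2) • Z ω) + (-(((‖x+y‖+‖x-y‖)/2) • Z ω)) := by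
          abel
        have h1 : gauge K x ≤ gauge K (x + ((‖x+y‖+‖x-y‖)/2) • Z ω)
            + gauge K (-(((‖x+y‖+‖x-y‖)/2) • Z ω)) := by
          calc gauge K x
              = gauge K ((x + ((‖x+y‖+‖x-y‖)/2) • Z ω) + (-(((‖x+y‖+‖x-y‖)/2) • Z ω))) := by
                rw [← hxa]
            _ ≤ _ := hsub _ _
        have h2 : gauge K (-(((‖x+y‖+‖x-y‖)/2) • Z ω)) ≤ ((‖x+y‖+‖x-y‖)/2) * (M * ε) := by
          rw [← smul_neg, hsmul _ hm0 (-(Z ω))]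
          exact mul_le_mul_of_nonneg_left hznegle hm0
        have h3 : ((‖x+y‖+‖x-y‖)/2) * (M * ε) ≤ mbar * (M * ε) :=
          mul_le_mul_of_nonneg_right hmbar (mul_nonneg hMpos.le hε0.le)
        rw [hK₁def]
        linarith only [h1, h2, h3, hgxl]
      have hga_pos : 0 < gauge K (x + ((‖x+y‖+‖x-y‖)/2) • Z ω) :=
        lt_of_lt_of_le hden hga_ge
      have hgb_le : gauge K (y + ((‖x+y‖-‖x-y‖)/2) • Z ω) ≤ gauge K y * (1 + R*M*ε) := by
        have h1 : gauge K (y + ((‖x+y‖-‖x-y‖)/2) • Z ω)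
            ≤ gauge K y + gauge K (((‖x+y‖-‖x-y‖)/2) • Z ω) := hsub _ _
        have h2 : gauge K (((‖x+y‖-‖x-y‖)/2) • Z ω) ≤ |(‖x+y‖-‖x-y‖)/2| * (M * ε) := by
          rcases le_or_gt 0 ((‖x+y‖-‖x-y‖)/2) with he | he
          · rw [hsmul _ he (Z ω), abs_of_nonneg he]
            have q1 : ((‖x+y‖-‖x-y‖)/2) * gauge K (Z ω) ≤ ((‖x+y‖-‖x-y‖)/2) * ε :=
              mul_le_mul_of_nonneg_left hω he
            have q2 : ((‖x+y‖-‖x-y‖)/2) * ε ≤ ((‖x+y‖-‖x-y‖)/2) * (M * ε) := by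
              nlinarith only [hM1, he, hε0,
                mul_nonneg (mul_nonneg he hε0.le) (by linarith only [hM1] : (0:ℝ) ≤ M - 1)]
            linarith only [q1, q2]
          · have hrw : ((‖x+y‖-‖x-y‖)/2) • Z ω = (-((‖x+y‖-‖x-y‖)/2)) • (-(Z ω)) := by
              rw [neg_smul_neg]
            rw [hrw, hsmul _ (by linarith only [he]) (-(Z ω)), abs_of_neg he]
            exact mul_le_mul_of_nonneg_left hznegle (by linarith only [he])
        have h3 : |(‖x+y‖-‖x-y‖)/2| * (M * ε) ≤ (R * gauge K y) * (M * ε) :=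
          mul_le_mul_of_nonneg_right (le_trans habse hyR)
            (mul_nonneg hMpos.le hε0.le)
        have h4 : gauge K y + (R * gauge K y) * (M * ε) = gauge K y * (1 + R*M*ε) := by ring
        linarith only [h1, h2, h3, h4]
      -- combine
      have hmain := smooth2 _ (y + ((‖x+y‖-‖x-y‖)/2) • Z ω) hga_pos
      rw [hab1, hab2]
      have hbsq : (gauge K (y + ((‖x+y‖-‖x-y‖)/2) • Z ω))^2 ≤ (gauge K y * (1 + R*M*ε))^2 :=
        pow_le_pow_left₀ (hgnn _) hgb_le 2
      have hdiv : 2 * D * (gauge K (y + ((‖x+y‖-‖x-y‖)/2) • Z ω))^2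
            / gauge K (x + ((‖x+y‖+‖x-y‖)/2) • Z ω)
          ≤ 2*D*(gauge K y*(1+R*M*ε))^2/(1 - K₁*ε) := by
        refine div_le_div₀ ?_ ?_ hden hga_ge
        · exact mul_nonneg (by linarith only [hD]) (sq_nonneg _)
        · have := mul_le_mul_of_nonneg_left hbsq (by linarith only [hD] : (0:ℝ) ≤ 2*D)
          linarith only [this]
      have h2ga : 2 * gauge K (x + ((‖x+y‖+‖x-y‖)/2) • Z ω)
          ≤ 2 * gauge K (x + ‖x‖ • Z ω) + 2*ε*K₂*gauge K y^2 := by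
        have h5 : ((‖x+y‖+‖x-y‖)/2 - ‖x‖) * ε ≤ K₂ * gauge K y^2 * ε :=
          mul_le_mul_of_nonneg_right hquad2 hε0.le
        linarith only [hga_le, h5]
      rw [hCcdef]
      linarith only [hmain, hdiv, h2ga]
    -- integrability
    have hint : ∀ (v : EuclideanSpace ℝ (Fin d)) (t : ℝ), 0 ≤ t →
        Integrable (fun ω => gauge K (v + t • Z ω)) μ := by
      intro v t ht
      have hmeas : Measurable (fun ω => gauge K (v + t • Z ω)) :=
        hcont.measurable.comp (measurable_const.add (hZmeas.const_smul t))
      refine Integrable.mono' (integrable_const (gauge K v + t * ε))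
        hmeas.aestronglyMeasurable ?_
      filter_upwards [hae] with ω hω
      rw [Real.norm_eq_abs, abs_of_nonneg (hgnn _)]
      have h1 : t * gauge K (Z ω) ≤ t * ε := mul_le_mul_of_nonneg_left hω ht
      calc gauge K (v + t • Z ω) ≤ gauge K v + gauge K (t • Z ω) := hsub _ _
        _ = gauge K v + t * gauge K (Z ω) := by rw [hsmul t ht]
        _ ≤ gauge K v + t * ε := by linarith only [h1]
    have I1 := hint (x+y) ‖x+y‖ hsp0
    have I2 := hint (x-y) ‖x-y‖ hsm0
    have I0 := hint x ‖x‖ hs_pos.le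
    -- integrate the pointwise bound
    have hFint : Integrable (fun ω => gauge K ((x+y) + ‖x+y‖ • Z ω)
        + gauge K ((x-y) + ‖x-y‖ • Z ω)) μ := I1.add I2
    have hGint : Integrable (fun ω => 2 * gauge K (x + ‖x‖ • Z ω) + Cc) μ :=
      (I0.const_mul 2).add (integrable_const Cc)
    have hmono := integral_mono_ae hFint hGint key
    rw [integral_add I1 I2, integral_add (I0.const_mul 2) (integrable_const Cc),
      integral_const_mul, integral_const] at hmono
    simp only [measure_univ, probReal_univ, ENNReal.toReal_one, smul_eq_mul, one_mul] at hmono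
    have hInt0 : ∫ ω, gauge K (x + ‖x‖ • Z ω) ∂μ = 1 := by rw [← hdef x, hx1]
    rw [hInt0] at hmono
    have hI1 : normEps (x+y) = ∫ ω, gauge K ((x+y) + ‖x+y‖ • Z ω) ∂μ := hdef (x+y)
    have hI2 : normEps (x-y) = ∫ ω, gauge K ((x-y) + ‖x-y‖ • Z ω) ∂μ := hdef (x-y)
    have hsum : normEps (x+y) + normEps (x-y) ≤ 2 + Cc := by
      rw [hI1, hI2]; linarith only [hmono]
    -- final arithmetic
    have hε2 : ε * ε ≤ ε * (1/4) := mul_le_mul_of_nonneg_left hε4 hε0.le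
    have harith : ε*K₂ + D*(1+R*M*ε)^2/(1 - K₁*ε) ≤ D*(1+c*ε)*(1-ε)^2 := by
      have h1 : (1+R*M*ε)^2 ≤ 1 + K₃*ε := by
        rw [hK₃def]
        have := mul_le_mul_of_nonneg_left hε2 (by positivity : (0:ℝ) ≤ R^2*M^2)
        nlinarith only [this]
      have h3 : (1 + K₃*ε) ≤ (1+K₄*ε)*(1-K₁*ε) := by
        have w1 : (K₁*ε)*(K₄*ε) ≤ (1/2)*(K₄*ε) :=
          mul_le_mul_of_nonneg_right hεK₁ (mul_nonneg hK₄pos.le hε0.le)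
        have w2 : 0 ≤ (K₁-1)*K₃*ε :=
          mul_nonneg (mul_nonneg (by linarith only [hK₁1]) hK₃pos.le) hε0.le
        have w3 : K₄ = K₃ + 2*K₁ + 2*K₁*K₃ := hK₄def
        nlinarith only [w1, w2, w3, hε0, hK₁pos, hK₃pos]
      have h2 : D*(1+R*M*ε)^2/(1 - K₁*ε) ≤ D*(1+K₄*ε) := by
        rw [div_le_iff₀ hden]
        have := mul_le_mul_of_nonneg_left (h1.trans h3) hD.le
        linarith only [this]
      -- linear part
      have hcε : c*ε = (2*(K₂/D + K₄ + 2) + 1)*ε := by rw [hcdef]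
      have v1 : 2*c*(ε*ε) ≤ 2*c*(ε*(1/4)) :=
        mul_le_mul_of_nonneg_left hε2 (by linarith only [hcpos])
      have v2 : 0 ≤ ε*ε := mul_nonneg hε0.le hε0.le
      have v3 : 0 ≤ c*(ε*ε*ε) :=
        mul_nonneg hcpos.le (mul_nonneg (mul_nonneg hε0.le hε0.le) hε0.le)
      have hdiv1 : (1+K₄*ε) + (K₂/D)*ε ≤ (1+c*ε)*(1-ε)^2 := by
        nlinarith only [v1, v2, v3, hcε, hε0]
      have w := mul_le_mul_of_nonneg_left hdiv1 hD.le
      have hK₂Dε : D*((K₂/D)*ε) = K₂*ε := by field_simp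
      linarith only [w, hK₂Dε, h2]
    have t1 : gauge K y^2*(ε*K₂) + gauge K y^2*(D*(1+R*M*ε)^2/(1-K₁*ε))
        ≤ gauge K y^2*(D*(1+c*ε)*(1-ε)^2) := by
      have := mul_le_mul_of_nonneg_left harith (sq_nonneg (gauge K y))
      linarith only [this]
    have t4 : D*(1+c*ε)*((1-ε)*gauge K y)^2 ≤ D*(1+c*ε)*normEps y^2 :=
      mul_le_mul_of_nonneg_left hnysq hDc0
    have hfinal : Cc/2 ≤ D * (1 + c * ε) * normEps y ^ 2 := by
      calc Cc/2 = gauge K y^2*(ε*K₂) + gauge K y^2*(D*(1+R*M*ε)^2/(1-K₁*ε)) := by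
            rw [hCcdef]; ring
        _ ≤ gauge K y^2*(D*(1+c*ε)*(1-ε)^2) := t1
        _ = D*(1+c*ε)*((1-ε)*gauge K y)^2 := by ring
        _ ≤ D*(1+c*ε)*normEps y^2 := t4
    linarith only [hsum, hfinal]
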